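/- In the dihedral Coxeter group I₂(m) (with m ≥ 2 finite), every element w satisfies Pop^{m−1}(w) = e, and the element α_{m−1} (the alternating product of m−1 simple generators ending in s₁) satisfies Pop^{m−2}(α_{m−1}) ≠ e. Hence the maximum forward orbit size of Pop on I₂(m) is exactly m. -/

import Mathlib

/-!
Statement 0: In a Coxeter group `W`, an element `w` is fixed by the Coxeter
pop-stack-sorting operator `Pop` (where `Pop w = w * w₀(D_R(w))`, with
`w₀(D_R(w))` the longest element of the standard parabolic subgroup generated by
the right descent set of `w`) if and only if `w` is the identity.
-/

namespace CoxPop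

variable {B W : Type*} [Group W] {M : CoxeterMatrix B} (cs : CoxeterSystem M W)

/-- The standard parabolic subgroup generated by the simple reflections indexed by `J`. -/
def parabolic (J : Set B) : Subgroup W :=
  Subgroup.closure (cs.simple '' J)

/-- The right descent set of `w`. -/
def D (w : W) : Set B := {i | cs.IsRightDescent w i}

/-- `u` is a longest element of the standard parabolic subgroup `W_J`. -/
def IsLongestIn (J : Set B) (u : W) : Prop :=
  u ∈ parabolic cs J ∧ ∀ v ∈ parabolic cs J, cs.length v ≤ cs.length u

open Classical in
/-- The longest element `w₀(J)` of the standard parabolic subgroup `W_J`. -/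
noncomputable def w0 (J : Set B) : W :=
  if h : ∃ u, IsLongestIn cs J u then h.choose else 1

/-- The Coxeter pop-stack-sorting operator: `Pop w = w * w₀(D_R(w))`. -/
noncomputable def Pop (w : W) : W := w * w0 cs (D cs w)

/-- The alternating word `⋯ s₁ s₂ s₁` of length `k` ending in `s₁` (index `0`),
whose product is the element `α_k` of the dihedral group. -/
def dihedralAltWord (k : ℕ) : List (Fin 2) :=
  (List.range k).map (fun j => if (k - 1 - j) % 2 = 0 then (0 : Fin 2) else 1)

/-! ### Auxiliary development -/

section Aux

open CoxeterSystem List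

lemma w0_eq_of_unique {J : Set B} {x : W} (hx : IsLongestIn cs J x)
    (huniq : ∀ u, IsLongestIn cs J u → u = x) : w0 cs J = x := by
  have hex : ∃ u, IsLongestIn cs J u := ⟨x, hx⟩
  rw [w0, dif_pos hex]
  exact huniq _ hex.choose_spec

lemma chain_of_reduced (ω : List B) (h : cs.IsReduced ω) : ω.Chain' (· ≠ ·) := by
  induction ω with
  | nil => simp [List.Chain']
  | cons a t ih =>
    rw [List.Chain', List.isChain_cons]
    refine ⟨?_, ih (CoxeterSystem.IsReduced.drop h 1)⟩
    intro b hb hab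
    cases t with
    | nil => simp at hb
    | cons c t' =>
      have hbc : c = b := by simpa using hb
      have hac : a = c := hab.trans hbc.symm
      have h1 : cs.wordProd (a :: c :: t') = cs.wordProd t' := by
        rw [hac, cs.wordProd_cons, cs.wordProd_cons, cs.simple_mul_simple_cancel_left]
      have h2 : cs.length (cs.wordProd (a :: c :: t')) = t'.length + 2 := by
        rw [h]; simp
      have h3 := cs.length_wordProd_le t'
      rw [h1] at h2
      omega

end Aux

section Dihedral

open CoxeterSystem List

variable {m : ℕ}

lemma fin2cases {a b : Fin 2} (h : a ≠ b) : (a = 0 ∧ b = 1) ∨ (a = 1 ∧ b = 0) := by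
  revert h; revert a b; decide

lemma fin2eq {a b c : Fin 2} (h1 : a ≠ b) (h2 : a ≠ c) : b = c := by
  revert h1 h2; revert a b c; decide

lemma fin_ne_zero {a : Fin 2} (h : a ≠ 0) : a = 1 := by
  revert h; revert a; decide

lemma fin_ne_one {a : Fin 2} (h : a ≠ 1) : a = 0 := by
  revert h; revert a; decide

section ZModFacts

lemma castNeZero (t : ℕ) (h0 : 0 < t) (h1 : t < m) : ((t : ℕ) : ZMod m) ≠ 0 := by
  haveI : NeZero m := ⟨by omega⟩
  intro h
  have hv := congrArg ZMod.val h
  rw [ZMod.val_cast_of_lt h1, ZMod.val_zero] at hv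
  omega

lemma castAdd (u v : ℕ) (h0 : 0 < u + v) (h1 : u + v < m) :
    ((u : ZMod m) + (v : ZMod m)) ≠ 0 := by
  have h := castNeZero (u + v) h0 h1
  push_cast at h
  exact h

lemma castAdd1 (u v : ℕ) (h1 : u + v + 1 < m) :
    ((u : ZMod m) + (v : ZMod m) + 1) ≠ 0 := by
  have h := castNeZero (u + v + 1) (by omega) h1
  push_cast at h
  exact h

lemma castNe (u v : ℕ) (h1 : u < v) (h2 : v < u + m) :
    ((u : ℕ) : ZMod m) ≠ ((v : ℕ) : ZMod m) := by
  intro h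
  have h3 : ((v - u : ℕ) : ZMod m) = 0 := by rw [Nat.cast_sub h1.le, ← h, sub_self]
  exact castNeZero _ (by omega) (by omega) h3

lemma r_pow (c : ZMod m) (t : ℕ) :
    (DihedralGroup.r c) ^ t = DihedralGroup.r ((t : ZMod m) * c) := by
  induction t with
  | zero => simp [DihedralGroup.one_def, -DihedralGroup.r_zero]
  | succ t ih =>
      rw [pow_succ, ih, DihedralGroup.r_mul_r]
      push_cast; ring_nf

end ZModFacts

variable (hm : 2 ≤ m) (cs : CoxeterSystem (CoxeterMatrix.I (m - 2)) W)

include hm in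
lemma Moff (a b : Fin 2) (hab : a ≠ b) : CoxeterMatrix.I (m - 2) a b = m := by
  show (if a = b then 1 else (m - 2) + 2) = m
  rw [if_neg hab]; omega

lemma Mdiag (a : Fin 2) : CoxeterMatrix.I (m - 2) a a = 1 := by
  show (if a = a then 1 else (m - 2) + 2) = 1
  rw [if_pos rfl]

include hm in
lemma liftable : CoxeterMatrix.IsLiftable (CoxeterMatrix.I (m - 2))
    (fun i : Fin 2 => DihedralGroup.sr (i.val : ZMod m)) := by
  intro i i'
  by_cases h : i = i'
  · subst h
    have h1 : CoxeterMatrix.I (m - 2) i i = 1 := Mdiag i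
    rw [h1]
    simp [DihedralGroup.one_def, -DihedralGroup.r_zero]
  · rw [Moff hm _ _ h, DihedralGroup.sr_mul_sr, r_pow]
    simp [DihedralGroup.one_def, -DihedralGroup.r_zero]

noncomputable def phi : W →* DihedralGroup m := cs.lift ⟨_, liftable hm⟩

lemma phi_simple (i : Fin 2) : phi hm cs (cs.simple i) = DihedralGroup.sr (i.val : ZMod m) :=
  cs.lift_apply_simple _ i

lemma phi_alt (a b : Fin 2) (k : ℕ) :
    phi hm cs (cs.wordProd (alternatingWord a b k)) =
      if Even k then
        DihedralGroup.r (((k / 2 : ℕ) : ZMod m) * ((b.val : ZMod m) - (a.val : ZMod m)))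
      else
        DihedralGroup.sr ((b.val : ZMod m) +
          ((k / 2 : ℕ) : ZMod m) * ((b.val : ZMod m) - (a.val : ZMod m))) := by
  rw [cs.prod_alternatingWord_eq_mul_pow, map_mul, map_pow, map_mul, phi_simple, phi_simple,
    DihedralGroup.sr_mul_sr, r_pow]
  split
  · rw [map_one, one_mul]
  · rw [phi_simple, DihedralGroup.sr_mul_r]

include hm in
lemma dist {j k : ℕ} {a b c d : Fin 2} (hab : a ≠ b) (hcd : c ≠ d) (hk : k ≤ m)
    (hcase : j < k ∨ (j = k ∧ 0 < k ∧ k < m ∧ b ≠ d)) :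
    cs.wordProd (alternatingWord a b j) ≠ cs.wordProd (alternatingWord c d k) := by
  intro h
  have h2 : phi hm cs (cs.wordProd (alternatingWord a b j)) =
      phi hm cs (cs.wordProd (alternatingWord c d k)) := congrArg _ h
  rw [phi_alt hm cs, phi_alt hm cs] at h2
  have hnum : j < k ∨ (j = k ∧ 0 < k ∧ k < m) := by
    rcases hcase with h' | ⟨h1, h2', h3, -⟩
    · exact Or.inl h'
    · exact Or.inr ⟨h1, h2', h3⟩
  rcases fin2cases hab with ⟨rfl, rfl⟩ | ⟨rfl, rfl⟩ <;>
    rcases fin2cases hcd with ⟨rfl, rfl⟩ | ⟨rfl, rfl⟩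
  case inl.inl | inr.inr =>
    have hjk : j < k := by
      rcases hcase with h' | ⟨-, -, -, hbd⟩
      · exact h'
      · exact absurd rfl hbd
    by_cases hj : j % 2 = 0 <;> by_cases hk2 : k % 2 = 0 <;>
      simp [Nat.even_iff, hj, hk2] at h2 <;>
      exact castNe (j/2) (k/2) (by omega) (by omega) h2
  case inl.inr | inr.inl =>
    rcases hnum with hjk | ⟨heq, hk0, hkm⟩ <;>
    by_cases hj : j % 2 = 0 <;> by_cases hk2 : k % 2 = 0 <;>
      simp [Nat.even_iff, hj, hk2] at h2 <;>
      first
      | (refine castAdd (j/2) (k/2) ?_ ?_ (by linear_combination h2) <;> omega)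
      | (refine castAdd (j/2) (k/2) ?_ ?_ (by linear_combination -h2) <;> omega)
      | (refine castAdd1 (j/2) (k/2) ?_ (by linear_combination h2) <;> omega)
      | (refine castAdd1 (j/2) (k/2) ?_ (by linear_combination -h2) <;> omega)

lemma alt_of_chain : ∀ (ω : List (Fin 2)), ω.Chain' (· ≠ ·) →
    ω = alternatingWord 1 0 ω.length ∨ ω = alternatingWord 0 1 ω.length := by
  intro ω
  induction ω with
  | nil => intro _; left; rfl
  | cons a t ih =>
    intro h
    rw [List.Chain', List.isChain_cons] at h
    obtain ⟨h1, h2⟩ := h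
    rcases ih h2 with ht | ht
    · -- t = alternatingWord 1 0 t.length
      match t, ht, h1 with
      | [], _, _ =>
        fin_cases a
        · left; rfl
        · right; rfl
      | b :: t', ht, h1 =>
        have hL : (b :: t').length = t'.length + 1 := by simp
        have htfull : b :: t' = alternatingWord 1 0 (t'.length + 1) := by rw [← hL]; exact ht
        have hb : b = if Even t'.length then (0 : Fin 2) else 1 := by
          have h' := htfull
          rw [alternatingWord_succ'] at h'
          exact (List.cons_eq_cons.mp h').1
        have ha : a ≠ b := h1 b rfl
        rw [hb] at ha
        left
        show a :: b :: t' = alternatingWord 1 0 (t'.length + 1 + 1)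
        rw [alternatingWord_succ', List.cons_eq_cons]
        refine ⟨?_, htfull⟩
        by_cases he : Even t'.length
        · simp only [he, if_true, Nat.even_add_one, not_true, if_false] at ha ⊢
          exact fin_ne_zero ha
        · simp only [he, if_false, Nat.even_add_one, not_false_iff, if_true] at ha ⊢
          exact fin_ne_one ha
    · match t, ht, h1 with
      | [], _, _ =>
        fin_cases a
        · left; rfl
        · right; rfl
      | b :: t', ht, h1 =>
        have hL : (b :: t').length = t'.length + 1 := by simp
        have htfull : b :: t' = alternatingWord 0 1 (t'.length + 1) := by rw [← hL]; exact ht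
        have hb : b = if Even t'.length then (1 : Fin 2) else 0 := by
          have h' := htfull
          rw [alternatingWord_succ'] at h'
          exact (List.cons_eq_cons.mp h').1
        have ha : a ≠ b := h1 b rfl
        rw [hb] at ha
        right
        show a :: b :: t' = alternatingWord 0 1 (t'.length + 1 + 1)
        rw [alternatingWord_succ', List.cons_eq_cons]
        refine ⟨?_, htfull⟩
        by_cases he : Even t'.length
        · simp only [he, if_true, Nat.even_add_one, not_true, if_false] at ha ⊢
          exact fin_ne_one ha
        · simp only [he, if_false, Nat.even_add_one, not_false_iff, if_true] at ha ⊢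
          exact fin_ne_zero ha

lemma classify (w : W) : ∃ a b : Fin 2, a ≠ b ∧
    w = cs.wordProd (alternatingWord a b (cs.length w)) := by
  obtain ⟨ω, hred, rfl⟩ := cs.exists_reduced_word' w
  have hch := chain_of_reduced cs ω hred
  have hlen : cs.length (cs.wordProd ω) = ω.length := hred
  rcases alt_of_chain ω hch with h | h
  · exact ⟨1, 0, by decide, by rw [hlen]; exact congrArg cs.wordProd h⟩
  · exact ⟨0, 1, by decide, by rw [hlen]; exact congrArg cs.wordProd h⟩

include hm in
lemma length_le (w : W) : cs.length w ≤ m := by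
  by_contra hcon
  obtain ⟨a, b, hab, hw⟩ := classify cs w
  have hred : cs.IsReduced (alternatingWord a b (cs.length w)) := by
    unfold CoxeterSystem.IsReduced
    rw [length_alternatingWord, ← hw]
  exact cs.not_isReduced_alternatingWord a b
    (by rw [Moff hm a b hab]; omega) (by rw [Moff hm a b hab]; omega) hred

include hm in
lemma reduced_alt (a b : Fin 2) (hab : a ≠ b) (k : ℕ) (hk : k ≤ m) :
    cs.length (cs.wordProd (alternatingWord a b k)) = k := by
  have hle : cs.length (cs.wordProd (alternatingWord a b k)) ≤ k := by
    have := cs.length_wordProd_le (alternatingWord a b k)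
    rwa [length_alternatingWord] at this
  rcases eq_or_lt_of_le hle with h | h
  · exact h
  · exfalso
    obtain ⟨c, d, hcd, hw⟩ := classify cs (cs.wordProd (alternatingWord a b k))
    exact dist hm cs hcd hab hk (Or.inl h) hw.symm

include hm in
lemma alt_ne (a b : Fin 2) (k : ℕ) (hab : a ≠ b) (h0 : 0 < k) (hkm : k < m) :
    cs.wordProd (alternatingWord a b k) ≠ cs.wordProd (alternatingWord b a k) :=
  dist hm cs hab hab.symm hkm.le (Or.inr ⟨rfl, h0, hkm, hab.symm⟩)

include hm in
lemma maxeq : cs.wordProd (alternatingWord (1 : Fin 2) 0 m) =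
    cs.wordProd (alternatingWord (0 : Fin 2) 1 m) := by
  have h := cs.prod_alternatingWord_eq_prod_alternatingWord_sub 1 0 m
    (by rw [Moff hm 1 0 (by decide)]; omega)
  rw [Moff hm 1 0 (by decide)] at h
  have h2 : m * 2 - m = m := by omega
  rwa [h2] at h

include hm in
lemma uniq_max (w : W) (hw : cs.length w = m) :
    w = cs.wordProd (alternatingWord (1 : Fin 2) 0 m) := by
  obtain ⟨a, b, hab, hw'⟩ := classify cs w
  rw [hw] at hw'
  rcases fin2cases hab with ⟨rfl, rfl⟩ | ⟨rfl, rfl⟩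
  · rw [hw', ← maxeq hm cs]
  · exact hw'

include hm in
lemma w0sq : cs.wordProd (alternatingWord (1 : Fin 2) 0 m) *
    cs.wordProd (alternatingWord (1 : Fin 2) 0 m) = 1 := by
  have hlen : cs.length (cs.wordProd (alternatingWord (1 : Fin 2) 0 m)) = m :=
    reduced_alt hm cs 1 0 (by decide) m le_rfl
  have hinv : cs.length (cs.wordProd (alternatingWord (1 : Fin 2) 0 m))⁻¹ = m := by
    rw [cs.length_inv, hlen]
  have h := uniq_max hm cs _ hinv
  have h2 := mul_inv_cancel (cs.wordProd (alternatingWord (1 : Fin 2) 0 m))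
  rw [h] at h2
  exact h2

lemma alt_mul_simple (a b : Fin 2) (k : ℕ) :
    cs.wordProd (alternatingWord a b (k + 1)) * cs.simple b =
      cs.wordProd (alternatingWord b a k) := by
  rw [alternatingWord_succ, cs.wordProd_concat, cs.simple_mul_simple_cancel_right]

include hm in
lemma isRightDescent_alt (a b : Fin 2) (k : ℕ) (hab : a ≠ b) (hk1 : 1 ≤ k) (hk : k ≤ m) :
    cs.IsRightDescent (cs.wordProd (alternatingWord a b k)) b := by
  obtain ⟨k', rfl⟩ : ∃ k', k = k' + 1 := ⟨k - 1, by omega⟩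
  show cs.length _ < cs.length _
  rw [alt_mul_simple, reduced_alt hm cs b a hab.symm k' (by omega),
    reduced_alt hm cs a b hab (k' + 1) hk]
  omega

include hm in
lemma not_isRightDescent_alt (a b : Fin 2) (k : ℕ) (hab : a ≠ b) (hk : k < m) :
    ¬ cs.IsRightDescent (cs.wordProd (alternatingWord a b k)) a := by
  intro hd
  rcases Nat.eq_zero_or_pos k with rfl | hk0
  · have h0 : cs.wordProd (alternatingWord a b 0) = 1 := cs.wordProd_nil
    rw [h0] at hd
    exact cs.not_isRightDescent_one a hd
  · have hw : cs.length (cs.wordProd (alternatingWord a b k)) = k :=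
      reduced_alt hm cs a b hab k hk.le
    have hlen : cs.length (cs.wordProd (alternatingWord a b k) * cs.simple a) + 1 = k := by
      have h := (cs.isRightDescent_iff).mp hd
      rwa [hw] at h
    obtain ⟨c, d, hcd, heq⟩ := classify cs (cs.wordProd (alternatingWord a b k) * cs.simple a)
    rw [show cs.length (cs.wordProd (alternatingWord a b k) * cs.simple a) = k - 1 by omega] at heq
    by_cases had : a = d
    · subst had
      rcases Nat.eq_zero_or_pos (k - 1) with hz | hpos
      · -- k = 1
        have hk1 : k = 1 := by omega
        subst hk1
        have h01 : cs.wordProd (alternatingWord c a 0) = 1 := cs.wordProd_nil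
        rw [hz] at heq
        rw [h01] at heq
        -- heq : w * s a = 1, so w = (s a)⁻¹ = s a
        have hwa : cs.wordProd (alternatingWord a b 1) = cs.simple a := by
          have := congrArg (· * cs.simple a) heq
          simpa [mul_assoc, cs.simple_mul_simple_self] using this
        have hba : cs.wordProd (alternatingWord b a 1) = cs.simple a := by
          rw [show alternatingWord b a 1 = [a] from rfl, cs.wordProd_cons, cs.wordProd_nil,
            mul_one]
        exact alt_ne hm cs a b 1 hab one_pos hk (hwa.trans hba.symm)
      · -- k - 1 ≥ 1
        obtain ⟨k'', hk''⟩ : ∃ k'', k - 1 = k'' + 1 := ⟨k - 2, by omega⟩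
        rw [hk''] at heq
        have hsplit : cs.wordProd (alternatingWord c a (k'' + 1)) =
            cs.wordProd (alternatingWord a c k'') * cs.simple a := by
          rw [alternatingWord_succ, cs.wordProd_concat]
        rw [hsplit] at heq
        have hw' : cs.wordProd (alternatingWord a b k) =
            cs.wordProd (alternatingWord a c k'') := mul_right_cancel heq
        have hle := cs.length_wordProd_le (alternatingWord a c k'')
        rw [length_alternatingWord] at hle
        rw [hw'] at hw
        omega
    · -- a ≠ d, so d = b and c = a
      have hbd : b = d := fin2eq hab had
      subst hbd
      have hca : c = a := fin2eq (Ne.symm hcd) (Ne.symm hab)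
      rw [hca] at heq
      -- heq : w * s a = π (alt a b (k-1)), so w = π (alt a b (k-1)) * s a = π (alt b a k)
      obtain ⟨k', hk'⟩ : ∃ k', k = k' + 1 := ⟨k - 1, by omega⟩
      rw [show k - 1 = k' by omega] at heq
      have hw2 : cs.wordProd (alternatingWord a b k) =
          cs.wordProd (alternatingWord a b k') * cs.simple a := by
        have := congrArg (· * cs.simple a) heq
        simpa [mul_assoc, cs.simple_mul_simple_self] using this
      have hba : cs.wordProd (alternatingWord b a k) =
          cs.wordProd (alternatingWord a b k') * cs.simple a := by
        rw [hk', alternatingWord_succ, cs.wordProd_concat]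
      exact alt_ne hm cs a b k hab hk0 hk (hw2.trans hba.symm)

/-! ### Parabolic subgroups and `w0` in the dihedral group -/

lemma parabolic_empty : parabolic cs (∅ : Set (Fin 2)) = ⊥ := by
  simp [parabolic]

lemma w0_empty : w0 cs (∅ : Set (Fin 2)) = 1 := by
  apply w0_eq_of_unique
  · constructor
    · exact one_mem _
    · intro v hv
      rw [parabolic_empty, Subgroup.mem_bot] at hv
      subst hv
      exact le_rfl
  · intro u hu
    have := hu.1
    rwa [parabolic_empty, Subgroup.mem_bot] at this

lemma mem_parabolic_single {i : Fin 2} {v : W} (hv : v ∈ parabolic cs {i}) :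
    v = 1 ∨ v = cs.simple i := by
  rw [parabolic, Set.image_singleton] at hv
  induction hv using Subgroup.closure_induction with
  | mem x hx => exact Or.inr (by simpa using hx)
  | one => exact Or.inl rfl
  | mul x y _ _ hx hy =>
      rcases hx with rfl | rfl <;> rcases hy with rfl | rfl <;>
        simp [cs.simple_mul_simple_self]
  | inv x _ hx =>
      rcases hx with rfl | rfl <;> simp [cs.inv_simple]

lemma simple_mem_parabolic_single (i : Fin 2) : cs.simple i ∈ parabolic cs {i} := by
  rw [parabolic, Set.image_singleton]
  exact Subgroup.subset_closure rfl

lemma w0_single (i : Fin 2) : w0 cs ({i} : Set (Fin 2)) = cs.simple i := by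
  apply w0_eq_of_unique
  · constructor
    · exact simple_mem_parabolic_single cs i
    · intro v hv
      rcases mem_parabolic_single cs hv with rfl | rfl
      · simp
      · exact le_rfl
  · intro u hu
    rcases mem_parabolic_single cs hu.1 with rfl | rfl
    · exfalso
      have h := hu.2 (cs.simple i) (simple_mem_parabolic_single cs i)
      rw [cs.length_simple, cs.length_one] at h
      omega
    · rfl

lemma parabolic_univ : parabolic cs (Set.univ : Set (Fin 2)) = ⊤ := by
  rw [parabolic, Set.image_univ, cs.subgroup_closure_range_simple]

include hm in
lemma w0_univ : w0 cs (Set.univ : Set (Fin 2)) =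
    cs.wordProd (alternatingWord (1 : Fin 2) 0 m) := by
  have hlen : cs.length (cs.wordProd (alternatingWord (1 : Fin 2) 0 m)) = m :=
    reduced_alt hm cs 1 0 (by decide) m le_rfl
  apply w0_eq_of_unique
  · constructor
    · rw [parabolic_univ]; trivial
    · intro v _
      rw [hlen]
      exact length_le hm cs v
  · intro u hu
    have h1 := hu.2 (cs.wordProd (alternatingWord (1 : Fin 2) 0 m))
      (by rw [parabolic_univ]; trivial)
    rw [hlen] at h1
    exact uniq_max hm cs u (le_antisymm (length_le hm cs u) h1)

/-! ### Computation of `Pop` -/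

lemma D_one : D cs (1 : W) = (∅ : Set (Fin 2)) := by
  ext i
  simp [D, cs.not_isRightDescent_one]

lemma pop_one : Pop cs (1 : W) = 1 := by
  rw [Pop, D_one, w0_empty, one_mul]

include hm in
lemma D_alt (a b : Fin 2) (k : ℕ) (hab : a ≠ b) (h0 : 0 < k) (hk : k < m) :
    D cs (cs.wordProd (alternatingWord a b k)) = ({b} : Set (Fin 2)) := by
  ext i
  simp only [D, Set.mem_setOf_eq, Set.mem_singleton_iff]
  constructor
  · intro hi
    by_contra hib
    have hia : i = a := fin2eq (Ne.symm hib) (Ne.symm hab)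
    subst hia
    exact not_isRightDescent_alt hm cs i b k hab hk hi
  · intro hi
    subst hi
    exact isRightDescent_alt hm cs a i k hab h0 hk.le

include hm in
lemma pop_alt (a b : Fin 2) (k : ℕ) (hab : a ≠ b) (h0 : 0 < k) (hk : k < m) :
    Pop cs (cs.wordProd (alternatingWord a b k)) =
      cs.wordProd (alternatingWord b a (k - 1)) := by
  rw [Pop, D_alt hm cs a b k hab h0 hk, w0_single]
  obtain ⟨k', rfl⟩ : ∃ k', k = k' + 1 := ⟨k - 1, by omega⟩
  rw [alt_mul_simple, Nat.add_sub_cancel]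

include hm in
lemma D_max : D cs (cs.wordProd (alternatingWord (1 : Fin 2) 0 m)) = Set.univ := by
  ext i
  simp only [D, Set.mem_setOf_eq, Set.mem_univ, iff_true]
  fin_cases i
  · exact isRightDescent_alt hm cs 1 0 m (by decide) (by omega) le_rfl
  · rw [maxeq hm cs]
    exact isRightDescent_alt hm cs 0 1 m (by decide) (by omega) le_rfl

include hm in
lemma pop_max : Pop cs (cs.wordProd (alternatingWord (1 : Fin 2) 0 m)) = 1 := by
  rw [Pop, D_max hm cs, w0_univ hm cs]
  exact w0sq hm cs

include hm in
lemma iter_pop : ∀ k : ℕ, k < m → ∀ w : W, cs.length w ≤ k → (Pop cs)^[k] w = 1 := by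
  intro k
  induction k with
  | zero =>
    intro _ w hw
    have : w = 1 := cs.length_eq_zero_iff.mp (by omega)
    simpa using this
  | succ k ih =>
    intro hk w hw
    rw [Function.iterate_succ_apply]
    by_cases hw1 : w = 1
    · subst hw1
      rw [pop_one]
      exact ih (by omega) 1 (by simp)
    · have h0 : 0 < cs.length w := by
        rcases Nat.eq_zero_or_pos (cs.length w) with h | h
        · exact absurd (cs.length_eq_zero_iff.mp h) hw1
        · exact h
      obtain ⟨a, b, hab, hwrit⟩ := classify cs w
      rw [hwrit, pop_alt hm cs a b (cs.length w) hab h0 (by omega)]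
      apply ih (by omega)
      have := reduced_alt hm cs b a hab.symm (cs.length w - 1) (by omega)
      omega

include hm in
lemma pop_iter_all (w : W) : (Pop cs)^[m - 1] w = 1 := by
  rcases eq_or_lt_of_le (length_le hm cs w) with heq | hlt
  · -- w is the longest element
    have hw := uniq_max hm cs w heq
    obtain ⟨k', hk'⟩ : ∃ k', m - 1 = k' + 1 := ⟨m - 2, by omega⟩
    rw [hk', Function.iterate_succ_apply, hw, pop_max hm cs]
    rw [Function.iterate_fixed (pop_one cs)]
  · exact iter_pop hm cs (m - 1) (by omega) w (by omega)

include hm in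
lemma pop_orbit : ∀ (j k : ℕ) (a b : Fin 2), a ≠ b → j ≤ k → k < m →
    ∃ c d : Fin 2, c ≠ d ∧
      (Pop cs)^[j] (cs.wordProd (alternatingWord a b k)) =
        cs.wordProd (alternatingWord c d (k - j)) := by
  intro j
  induction j with
  | zero =>
    intro k a b hab _ _
    exact ⟨a, b, hab, rfl⟩
  | succ j ih =>
    intro k a b hab hjk hk
    obtain ⟨c, d, hcd, hiter⟩ := ih k a b hab (by omega) hk
    rw [Function.iterate_succ_apply', hiter,
      pop_alt hm cs c d (k - j) hcd (by omega) (by omega)]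
    exact ⟨d, c, hcd.symm, by rw [show k - j - 1 = k - (j + 1) by omega]⟩

lemma dihedralAltWord_eq : ∀ k : ℕ, dihedralAltWord k = alternatingWord (1 : Fin 2) 0 k := by
  intro k
  induction k with
  | zero => rfl
  | succ k ih =>
    rw [alternatingWord_succ', ← ih]
    unfold dihedralAltWord
    rw [List.range_succ_eq_map, List.map_cons, List.map_map]
    congr 1
    · simp [Nat.even_iff]
    · apply List.map_congr_left
      intro j _
      simp only [Function.comp_apply]
      congr 2
      omega

end Dihedral

/-- in the dihedral Coxeter group `I₂(m)` (`m ≥ 2`, realized as the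
Coxeter group of the matrix `CoxeterMatrix.I (m - 2)`, whose off-diagonal entry is
`m`), every element `w` satisfies `Pop^[m-1] w = e`, while the alternating element
`α_{m-1}` satisfies `Pop^[m-2] α_{m-1} ≠ e`. Hence the maximum forward orbit size of
`Pop` is exactly `m`. -/
theorem dihedral_pop_orbit {W : Type*} [Group W] (m : ℕ) (hm : 2 ≤ m)
    (cs : CoxeterSystem (CoxeterMatrix.I (m - 2)) W) :
    (∀ w : W, (Pop cs)^[m - 1] w = 1) ∧
      (Pop cs)^[m - 2] (cs.wordProd (dihedralAltWord (m - 1))) ≠ 1 := by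
  constructor
  · exact pop_iter_all hm cs
  · rw [dihedralAltWord_eq]
    obtain ⟨c, d, hcd, hiter⟩ := pop_orbit hm cs (m - 2) (m - 1) 1 0
      (by decide) (by omega) (by omega)
    rw [hiter, show m - 1 - (m - 2) = 1 by omega]
    intro hone
    have := reduced_alt hm cs c d hcd 1 (by omega)
    rw [hone, cs.length_one] at this
    omega

end CoxPop
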